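/- Under majority agreement (k = 0), two dReps suffice to elect the intrinsically optimal proposal: if D consists of the all-zeros dRep and the all-ones dRep, then every voter delegates to some dRep in D, and with ties broken in favor of the proposal with maximum intrinsic score, the winner of the resulting election equals the intrinsic winner win(P). -/
import Mathlib


open Finset

/-- An instance of proxy selection: `intrinsic i j` is voter `i`'s intrinsic approval of
proposal `j`; `visible i j` records whether this preference is revealed to the voter
(the revealed preference is `some (intrinsic i j)` if visible and `⊥` otherwise). -/
structure PSInstance (n m : ℕ) where
  intrinsic : Fin n → Fin m → Bool
  visible : Fin n → Fin m → Bool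

namespace PSInstance

variable {n m : ℕ}

/-- Revealed preference of voter `i` on proposal `j`. -/
def revealed (I : PSInstance n m) (i : Fin n) (j : Fin m) : Option Bool :=
  if I.visible i j then some (I.intrinsic i j) else none

/-- The revealed set `R_i` of voter `i`. -/
def Rset (I : PSInstance n m) (i : Fin n) : Finset (Fin m) :=
  univ.filter fun j => I.visible i j

/-- `m_i = |R_i|`. -/
def mi (I : PSInstance n m) (i : Fin n) : ℕ := (I.Rset i).card

/-- Hamming distance between voter `i`'s revealed ballot and type `t`, restricted to `R_i`. -/
def dist (I : PSInstance n m) (i : Fin n) (t : Fin m → Bool) : ℕ :=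
  (univ.filter fun j => I.visible i j ∧ I.intrinsic i j ≠ t j).card

/-- Voter `i` (with reluctance parameter `k`) is attracted by a dRep of type `t`. -/
def Attracted (I : PSInstance n m) (k : ℕ) (i : Fin n) (t : Fin m → Bool) : Prop :=
  I.dist i t ≤ (I.mi i - k) / 2

instance (I : PSInstance n m) (k : ℕ) (i : Fin n) (t : Fin m → Bool) :
    Decidable (I.Attracted k i t) := by unfold Attracted; exact inferInstance

/-- Intrinsic approval score of proposal `j`. -/
def sc (I : PSInstance n m) (j : Fin m) : ℕ :=
  (univ.filter fun i => I.intrinsic i j = true).card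

/-- Revealed approval score of proposal `j`. -/
def rsc (I : PSInstance n m) (j : Fin m) : ℕ :=
  (univ.filter fun i => I.visible i j ∧ I.intrinsic i j = true).card

/-- `j` is an intrinsically optimal proposal (`win(P)`). -/
def IsOpt (I : PSInstance n m) (j : Fin m) : Prop := ∀ j', I.sc j' ≤ I.sc j

/-- Total score of proposal `j` given a family `D` of dReps and a delegation assignment
`deleg` (delegating voters contribute through their dRep's ballot, the rest vote their
revealed preferences directly). -/
def totalScore {ι : Type} (I : PSInstance n m) (D : ι → Fin m → Bool)
    (deleg : Fin n → Option ι) (j : Fin m) : ℕ :=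
  (univ.filter fun i => (match deleg i with
    | some d => D d j
    | none => I.visible i j && I.intrinsic i j) = true).card

/-- A delegation assignment is valid (w.r.t. per-voter reluctance parameters `k`) if every
delegating voter is attracted by their chosen dRep, and every voter attracted by at least
one dRep delegates (to an arbitrary one of them). -/
def ValidDeleg {ι : Type} (I : PSInstance n m) (k : Fin n → ℕ) (D : ι → Fin m → Bool)
    (deleg : Fin n → Option ι) : Prop :=
  (∀ i d, deleg i = some d → I.Attracted (k i) i (D d)) ∧
  (∀ i, (∃ d, I.Attracted (k i) i (D d)) → deleg i ≠ none)

/-- `j` is elected: it maximizes total score, ties broken in favor of maximum intrinsic score. -/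
def Elected {ι : Type} (I : PSInstance n m) (D : ι → Fin m → Bool)
    (deleg : Fin n → Option ι) (j : Fin m) : Prop :=
  (∀ j', I.totalScore D deleg j' ≤ I.totalScore D deleg j) ∧
  (∀ j', I.totalScore D deleg j' = I.totalScore D deleg j → I.sc j' ≤ I.sc j)

/-- `j` is elected when ties are broken in favor of maximum *revealed* score. -/
def ElectedRev {ι : Type} (I : PSInstance n m) (D : ι → Fin m → Bool)
    (deleg : Fin n → Option ι) (j : Fin m) : Prop :=
  (∀ j', I.totalScore D deleg j' ≤ I.totalScore D deleg j) ∧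
  (∀ j', I.totalScore D deleg j' = I.totalScore D deleg j → I.rsc j' ≤ I.rsc j)

end PSInstance

/-- Under majority agreement, the pair consisting of the all-zeros dRep and
the all-ones dRep attracts every voter, and every elected proposal (ties broken toward
maximum intrinsic score) has intrinsic score equal to the optimum, i.e. the intrinsic
winner is elected. -/
theorem stmt9 (n m : ℕ) (I : PSInstance n m) (jopt : Fin m) (hopt : I.IsOpt jopt) :
    (∀ i, ∃ b : Bool, I.Attracted 0 i (fun _ => b)) ∧
    ∀ deleg : Fin n → Option Bool,
      I.ValidDeleg (fun _ => 0) (fun b _ => b) deleg →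
      ∀ j, I.Elected (fun b _ => b) deleg j → I.sc j = I.sc jopt := by
  have key : ∀ i, I.dist i (fun _ => false) + I.dist i (fun _ => true) = I.mi i := by
    intro i
    simp only [PSInstance.dist, PSInstance.mi, PSInstance.Rset, Finset.card_filter]
    rw [← Finset.sum_add_distrib]
    apply Finset.sum_congr rfl
    intro j _
    by_cases h : I.visible i j <;> cases hb : I.intrinsic i j <;> simp [h, hb]
  have attr : ∀ i, ∃ b : Bool, I.Attracted 0 i (fun _ => b) := by
    intro i
    have h := key i
    by_cases hle : I.dist i (fun _ => false) ≤ (I.mi i - 0) / 2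
    · exact ⟨false, hle⟩
    · exact ⟨true, by unfold PSInstance.Attracted; omega⟩
  refine ⟨attr, ?_⟩
  intro deleg hv j hel
  have hall : ∀ i, ∃ d, deleg i = some d := by
    intro i
    obtain ⟨b, hb⟩ := attr i
    have := hv.2 i ⟨b, hb⟩
    cases hd : deleg i with
    | none => exact absurd hd this
    | some d => exact ⟨d, rfl⟩
  have hconst : ∀ j₁ j₂ : Fin m,
      I.totalScore (fun b _ => b) deleg j₁ = I.totalScore (fun b _ => b) deleg j₂ := by
    intro j₁ j₂
    unfold PSInstance.totalScore
    congr 1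
    apply Finset.filter_congr
    intro i _
    obtain ⟨d, hd⟩ := hall i
    simp [hd]
  exact le_antisymm (hopt j) (hel.2 jopt (hconst jopt j))
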